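/- For a bipartite graph G, the directed edge matrix A_e, with arcs ordered so that all arcs from U to W come first, has the block anti-diagonal form [[0, B_e],[C_e, 0]] for some |E|×|E| matrices B_e, C_e; consequently the spectrum of A_e is symmetric with respect to the origin: η is an eigenvalue of A_e with multiplicity k if and only if −η is an eigenvalue with multiplicity k. -/
import Mathlib


open SimpleGraph Matrix Polynomial

lemma dvd_comp_neg {R : Type*} [CommRing R] {b : R} {k : ℕ} {q : R[X]}
    (h : (X - C b) ^ k ∣ q) : (X - C (-b)) ^ k ∣ q.comp (-X) := by
  have h2 := map_dvd (compRingHom (-X)) h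
  simp only [coe_compRingHom_apply, pow_comp, sub_comp, X_comp, C_comp] at h2
  have : (-X - C b : R[X]) = (-1) * (X - C (-b)) := by ring_nf; rw [map_neg]; ring
  rw [this, mul_pow] at h2
  exact (dvd_mul_left _ _).trans h2

lemma rootMultiplicity_comp_neg {a : ℂ} {p : ℂ[X]} (hp : p ≠ 0) :
    rootMultiplicity a (p.comp (-X)) = rootMultiplicity (-a) p := by
  have hinv : (p.comp (-X)).comp (-X) = p := by
    rw [comp_assoc]; simp
  have hne : p.comp (-X) ≠ 0 := by
    intro h; apply hp; rw [← hinv, h, zero_comp]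
  apply le_antisymm
  · apply (le_rootMultiplicity_iff hp).2
    have := dvd_comp_neg (pow_rootMultiplicity_dvd (p.comp (-X)) a)
    rw [hinv] at this
    simpa using this
  · apply (le_rootMultiplicity_iff hne).2
    have := dvd_comp_neg (pow_rootMultiplicity_dvd p (-a))
    simpa using this

lemma charpoly_comp_neg {n : Type*} [Fintype n] [DecidableEq n] (M : Matrix n n ℂ) :
    (M.charpoly).comp (-X) = (-1) ^ (Fintype.card n) * (-M).charpoly := by
  unfold Matrix.charpoly
  rw [show ((charmatrix M).det).comp (-X) = compRingHom (-X) (charmatrix M).det from rfl,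
      RingHom.map_det]
  have h : (charmatrix M).map (compRingHom (-X)) = -(charmatrix (-M)) := by
    ext i j
    by_cases hij : i = j
    · subst hij
      simp [charmatrix_apply_eq]
      ring
    · simp [charmatrix_apply_ne _ _ _ hij]
  rw [show (compRingHom (-X)).mapMatrix (charmatrix M) = (charmatrix M).map (compRingHom (-X))
      from rfl, h, det_neg]

/-- The directed edge matrix of a graph. -/
def edgeMatrix {V : Type*} [DecidableEq V] (G : SimpleGraph V) [DecidableRel G.Adj]
    (R : Type*) [Zero R] [One R] : Matrix G.Dart G.Dart R :=
  fun e f => if e.snd = f.fst ∧ f ≠ e.symm then 1 else 0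

/-- For a bipartite graph, the directed edge matrix is block anti-diagonal with respect
to the partition of arcs into those oriented from `U` to `W` and those from `W` to `U`
(entries between arcs with origins on the same side vanish); consequently its spectrum
is symmetric with respect to the origin: `η` is an eigenvalue with multiplicity `k` iff
`-η` is an eigenvalue with multiplicity `k`. -/
theorem edgeMatrix_bipartite_block_antidiagonal {U W : Type*} [Fintype U] [Fintype W]
    [DecidableEq U] [DecidableEq W]
    (G : SimpleGraph (U ⊕ W)) [DecidableRel G.Adj]
    (hbipL : ∀ u u' : U, ¬ G.Adj (Sum.inl u) (Sum.inl u'))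
    (hbipR : ∀ w w' : W, ¬ G.Adj (Sum.inr w) (Sum.inr w')) :
    (∀ d d' : G.Dart, d.fst.isLeft = d'.fst.isLeft → edgeMatrix G ℂ d d' = 0) ∧
    (∀ η : ℂ, ((edgeMatrix G ℂ).charpoly).rootMultiplicity η =
      ((edgeMatrix G ℂ).charpoly).rootMultiplicity (-η)) := by
  have hadj : ∀ a b : U ⊕ W, G.Adj a b → a.isLeft ≠ b.isLeft := by
    rintro (u | w) (u' | w') hab h <;> simp at h <;>
      [exact hbipL u u' hab; exact hbipR w w' hab]
  set A : Matrix G.Dart G.Dart ℂ := edgeMatrix G ℂ with hA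
  have h1 : ∀ d d' : G.Dart, d.fst.isLeft = d'.fst.isLeft → A d d' = 0 := by
    intro d d' h
    rw [hA]
    unfold edgeMatrix
    rw [if_neg]
    rintro ⟨heq, -⟩
    exact hadj d.fst d.snd d.adj (heq ▸ h)
  refine ⟨h1, fun η => ?_⟩
  set s : G.Dart → ℂ := fun d => if d.fst.isLeft then 1 else -1 with hs
  have hs2 : ∀ d, s d * s d = 1 := by
    intro d; by_cases h : d.fst.isLeft <;> simp [hs, h]
  have hconj : ∀ i j : G.Dart, s i * A i j * s j = -A i j := by
    intro i j
    by_cases hLL : i.fst.isLeft = j.fst.isLeft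
    · rw [h1 i j hLL]; ring
    · have hss : s i * s j = -1 := by
        cases hi : i.fst.isLeft <;> cases hj : j.fst.isLeft <;>
          simp [hs, hi, hj] <;> simp [hi, hj] at hLL
      rw [mul_right_comm, hss, neg_one_mul]
  set Dp : Matrix G.Dart G.Dart ℂ[X] := diagonal (fun d => C (s d)) with hDp
  have hDp1 : Dp * Dp = 1 := by
    rw [hDp, diagonal_mul_diagonal]
    have : (fun d => C (s d) * C (s d)) = fun _ : G.Dart => (1 : ℂ[X]) := by
      funext d; rw [← C_mul, hs2, C_1]
    rw [this, diagonal_one]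
  have hconjM : Dp * charmatrix A * Dp = charmatrix (-A) := by
    refine Matrix.ext fun i j => ?_
    rw [mul_diagonal, hDp, diagonal_mul]
    by_cases hij : i = j
    · subst hij
      rw [charmatrix_apply_eq, charmatrix_apply_eq, h1 i i rfl, neg_apply, h1 i i rfl]
      rw [mul_comm, ← mul_assoc, ← C_mul, hs2, C_1, one_mul, neg_zero]
    · rw [charmatrix_apply_ne _ _ _ hij, charmatrix_apply_ne _ _ _ hij, neg_apply,
        ← hconj i j]
      rw [show C (s i) * -C (A i j) * C (s j) = -C (s i * A i j * s j) by
        rw [C_mul, C_mul]; ring]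
  have hcp : (-A).charpoly = A.charpoly := by
    unfold Matrix.charpoly
    rw [← hconjM, det_mul, det_mul]
    have : Dp.det * (charmatrix A).det * Dp.det = (Dp * Dp).det * (charmatrix A).det := by
      rw [det_mul]; ring
    rw [this, hDp1, det_one, one_mul]
  have hA0 : A.charpoly ≠ 0 := A.charpoly_monic.ne_zero
  rw [← rootMultiplicity_comp_neg hA0, charpoly_comp_neg, hcp, rootMultiplicity_mul
      (mul_ne_zero (pow_ne_zero _ (by exact neg_ne_zero.2 one_ne_zero)) hA0),
    show ((-1 : ℂ[X]) ^ Fintype.card G.Dart) = C ((-1 : ℂ) ^ Fintype.card G.Dart) by simp,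
    rootMultiplicity_C, zero_add]
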